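/- (Discrete embedding inequality.) There exists a constant C̃_Ω > 0 depending only on L (independent of the grid size) such that for every M ≥ 2 and every grid function v ∈ V_h, ‖v‖_∞ ≤ C̃_Ω ( ‖v‖ + ‖(1+Δ_h)v‖ ). -/

import Mathlib

open scoped BigOperators


open scoped BigOperators

/-- discrete Laplacian on `L`-periodic grid functions (indices mod `M`) -/
noncomputable def dLap (M : ℕ) (h : ℝ) (v : ZMod M → ZMod M → ℝ) : ZMod M → ZMod M → ℝ :=
  fun i j => (v (i + 1) j + v (i - 1) j + v i (j + 1) + v i (j - 1) - 4 * v i j) / h ^ 2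

/-- discrete inner product ⟨v,w⟩ = h² Σ_{ij} v_{ij} w_{ij} -/
noncomputable def dInner (M : ℕ) [NeZero M] (h : ℝ) (v w : ZMod M → ZMod M → ℝ) : ℝ :=
  h ^ 2 * ∑ i : ZMod M, ∑ j : ZMod M, v i j * w i j

/-- discrete L² norm -/
noncomputable def dNorm (M : ℕ) [NeZero M] (h : ℝ) (v : ZMod M → ZMod M → ℝ) : ℝ :=
  Real.sqrt (dInner M h v v)

/-- the operator (1+Δ_h) -/
noncomputable def opA (M : ℕ) (h : ℝ) (v : ZMod M → ZMod M → ℝ) : ZMod M → ZMod M → ℝ :=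
  v + dLap M h v

/-- pointwise nonlinearity f(u) = u³ - g u² - ε u -/
noncomputable def fPt (g ε : ℝ) (M : ℕ) (v : ZMod M → ZMod M → ℝ) : ZMod M → ZMod M → ℝ :=
  fun i j => (v i j) ^ 3 - g * (v i j) ^ 2 - ε * v i j

/-- discrete energy E[v] = ½‖(1+Δ_h)v‖² + ¼‖v‖₄⁴ - (g/3)⟨v²,v⟩ - (ε/2)‖v‖² -/
noncomputable def dEnergy (M : ℕ) [NeZero M] (h g ε : ℝ) (v : ZMod M → ZMod M → ℝ) : ℝ :=
  (1 / 2) * dInner M h (opA M h v) (opA M h v)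
    + (1 / 4) * (h ^ 2 * ∑ i : ZMod M, ∑ j : ZMod M, |v i j| ^ 4)
    - (g / 3) * dInner M h (fun i j => (v i j) ^ 2) v
    - (ε / 2) * dInner M h v v


open Finset

namespace DEIaux


lemma sqrt_le_of_le_sq {x c : ℝ} (hc : 0 ≤ c) (hx : x ≤ c ^ 2) : Real.sqrt x ≤ c := by
  calc Real.sqrt x ≤ Real.sqrt (c ^ 2) := Real.sqrt_le_sqrt hx
    _ = c := Real.sqrt_sq hc

lemma sqrt_mul_le_avg {a b : ℝ} (ha : 0 ≤ a) (hb : 0 ≤ b) :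
    Real.sqrt (a * b) ≤ (a + b) / 2 := by
  apply sqrt_le_of_le_sq (by linarith)
  nlinarith [sq_nonneg (a - b)]

lemma sqrt_four_mul {x : ℝ} (hx : 0 ≤ x) : Real.sqrt (4 * x) = 2 * Real.sqrt x := by
  rw [show (4 : ℝ) * x = 2 ^ 2 * x by ring, Real.sqrt_mul (by positivity), Real.sqrt_sq (by norm_num)]

variable {M : ℕ} [NeZero M]

lemma sum_shift (F : ZMod M → ZMod M → ℝ) (a b : ZMod M) :
    ∑ i : ZMod M, ∑ j : ZMod M, F (i + a) (j + b) = ∑ i : ZMod M, ∑ j : ZMod M, F i j := by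
  have h1 : ∀ x : ZMod M, ∑ j : ZMod M, F x (j + b) = ∑ j : ZMod M, F x j := fun x =>
    Equiv.sum_comp (Equiv.addRight b) (F x)
  calc ∑ i : ZMod M, ∑ j : ZMod M, F (i + a) (j + b)
      = ∑ i : ZMod M, ∑ j : ZMod M, F (i + a) j := Finset.sum_congr rfl fun i _ => h1 (i + a)
    _ = ∑ i : ZMod M, ∑ j : ZMod M, F i j :=
        Equiv.sum_comp (Equiv.addRight a) (fun x => ∑ j : ZMod M, F x j)

lemma cs2 (f g : ZMod M → ZMod M → ℝ) :
    ∑ i : ZMod M, ∑ j : ZMod M, |f i j| * |g i j| ≤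
      Real.sqrt (∑ i : ZMod M, ∑ j : ZMod M, f i j ^ 2) *
      Real.sqrt (∑ i : ZMod M, ∑ j : ZMod M, g i j ^ 2) := by
  have key : (∑ i : ZMod M, ∑ j : ZMod M, |f i j| * |g i j|) ^ 2 ≤
      (∑ i : ZMod M, ∑ j : ZMod M, f i j ^ 2) * (∑ i : ZMod M, ∑ j : ZMod M, g i j ^ 2) := by
    have h := Finset.sum_mul_sq_le_sq_mul_sq Finset.univ
      (fun p : ZMod M × ZMod M => |f p.1 p.2|) (fun p : ZMod M × ZMod M => |g p.1 p.2|)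
    simpa [Fintype.sum_prod_type, sq_abs] using h
  have h0 : 0 ≤ ∑ i : ZMod M, ∑ j : ZMod M, |f i j| * |g i j| :=
    Finset.sum_nonneg fun i _ => Finset.sum_nonneg fun j _ => by positivity
  have h1 : 0 ≤ ∑ i : ZMod M, ∑ j : ZMod M, f i j ^ 2 :=
    Finset.sum_nonneg fun i _ => Finset.sum_nonneg fun j _ => by positivity
  calc ∑ i : ZMod M, ∑ j : ZMod M, |f i j| * |g i j|
      = Real.sqrt ((∑ i : ZMod M, ∑ j : ZMod M, |f i j| * |g i j|) ^ 2) :=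
        (Real.sqrt_sq h0).symm
    _ ≤ Real.sqrt ((∑ i : ZMod M, ∑ j : ZMod M, f i j ^ 2) *
          (∑ i : ZMod M, ∑ j : ZMod M, g i j ^ 2)) := Real.sqrt_le_sqrt key
    _ = _ := Real.sqrt_mul h1 _

lemma oneD (u : ZMod M → ℝ) (j : ZMod M) :
    u j ≤ (1 / (M : ℝ)) * ∑ k : ZMod M, u k + ∑ l : ZMod M, |u (l + 1) - u l| := by
  set D := ∑ l : ZMod M, |u (l + 1) - u l| with hD
  have key : ∀ k : ZMod M, u j ≤ u k + D := by
    intro k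
    set t := (j - k).val with ht
    have hjk : k + ((t : ℕ) : ZMod M) = j := by
      rw [ht, ZMod.natCast_zmod_val]; ring
    have tel : u j - u k = ∑ s ∈ Finset.range t, (u (k + ((s + 1 : ℕ) : ZMod M)) - u (k + ((s : ℕ) : ZMod M))) := by
      rw [Finset.sum_range_sub (fun s : ℕ => u (k + ((s : ℕ) : ZMod M))) t]
      rw [hjk]
      simp
    have hbound : ∑ s ∈ Finset.range t, (u (k + ((s + 1 : ℕ) : ZMod M)) - u (k + ((s : ℕ) : ZMod M))) ≤ D := by
      have step1 : ∑ s ∈ Finset.range t, (u (k + ((s + 1 : ℕ) : ZMod M)) - u (k + ((s : ℕ) : ZMod M)))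
          ≤ ∑ s ∈ Finset.range t, |u ((k + ((s : ℕ) : ZMod M)) + 1) - u (k + ((s : ℕ) : ZMod M))| := by
        apply Finset.sum_le_sum
        intro s _
        have : ((s + 1 : ℕ) : ZMod M) = ((s : ℕ) : ZMod M) + 1 := by push_cast; ring
        rw [this, ← add_assoc]
        exact le_abs_self _
      have hinj : ∀ x ∈ Finset.range t, ∀ y ∈ Finset.range t,
          k + ((x : ℕ) : ZMod M) = k + ((y : ℕ) : ZMod M) → x = y := by
        intro x hx y hy hxy
        have htM : t < M := by rw [ht]; exact ZMod.val_lt _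
        have hxM : x < M := lt_trans (Finset.mem_range.mp hx) htM
        have hyM : y < M := lt_trans (Finset.mem_range.mp hy) htM
        have : ((x : ℕ) : ZMod M) = ((y : ℕ) : ZMod M) := by
          have := add_left_cancel hxy; exact this
        calc x = ((x : ℕ) : ZMod M).val := (ZMod.val_cast_of_lt hxM).symm
          _ = ((y : ℕ) : ZMod M).val := by rw [this]
          _ = y := ZMod.val_cast_of_lt hyM
      have step2 : ∑ s ∈ Finset.range t, |u ((k + ((s : ℕ) : ZMod M)) + 1) - u (k + ((s : ℕ) : ZMod M))| ≤ D := by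
        rw [hD]
        calc ∑ s ∈ Finset.range t, |u ((k + ((s : ℕ) : ZMod M)) + 1) - u (k + ((s : ℕ) : ZMod M))|
            = ∑ l ∈ (Finset.range t).image (fun s : ℕ => k + ((s : ℕ) : ZMod M)), |u (l + 1) - u l| :=
              (Finset.sum_image (f := fun l : ZMod M => |u (l + 1) - u l|) hinj).symm
          _ ≤ ∑ l : ZMod M, |u (l + 1) - u l| :=
              Finset.sum_le_sum_of_subset_of_nonneg (Finset.subset_univ _)
                (fun l _ _ => abs_nonneg _)
      linarith
    linarith [tel, hbound]
  have hMpos : (0 : ℝ) < M := by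
    have := NeZero.pos M
    exact_mod_cast this
  have sumkey : (M : ℝ) * u j ≤ (∑ k : ZMod M, u k) + (M : ℝ) * D := by
    have h := Finset.sum_le_sum (fun k (_ : k ∈ Finset.univ) => key k)
    have hl : ∑ _k : ZMod M, u j = (M : ℝ) * u j := by
      rw [Finset.sum_const, Finset.card_univ, ZMod.card, nsmul_eq_mul]
    have hr : ∑ k : ZMod M, (u k + D) = (∑ k : ZMod M, u k) + (M : ℝ) * D := by
      rw [Finset.sum_add_distrib, Finset.sum_const, Finset.card_univ, ZMod.card, nsmul_eq_mul]
    rw [hl, hr] at h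
    exact h
  have hfin : u j ≤ ((∑ k : ZMod M, u k) + (M:ℝ) * D) / M := by
    rw [le_div_iff₀ hMpos]; nlinarith [sumkey]
  calc u j ≤ ((∑ k : ZMod M, u k) + (M:ℝ) * D) / M := hfin
    _ = (1 / (M : ℝ)) * ∑ k : ZMod M, u k + D := by field_simp




variable (v : ZMod M → ZMod M → ℝ)

lemma r_sq10 : ∑ i : ZMod M, ∑ j : ZMod M, v (i + 1) j ^ 2 = ∑ i : ZMod M, ∑ j : ZMod M, v i j ^ 2 := by
  have h := sum_shift (fun a b => v a b ^ 2) 1 0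
  simpa using h

lemma r_sq01 : ∑ i : ZMod M, ∑ j : ZMod M, v i (j + 1) ^ 2 = ∑ i : ZMod M, ∑ j : ZMod M, v i j ^ 2 := by
  have h := sum_shift (fun a b => v a b ^ 2) 0 1
  simpa using h

lemma r_sq11 : ∑ i : ZMod M, ∑ j : ZMod M, v (i + 1) (j + 1) ^ 2 = ∑ i : ZMod M, ∑ j : ZMod M, v i j ^ 2 := by
  have h := sum_shift (fun a b => v a b ^ 2) 1 1
  simpa using h

lemma r4 : ∑ i : ZMod M, ∑ j : ZMod M, v i j * v (i - 1) j
    = ∑ i : ZMod M, ∑ j : ZMod M, v (i + 1) j * v i j := by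
  have h := sum_shift (fun a b => v a b * v (a - 1) b) 1 0
  simp only [add_zero, add_sub_cancel_right] at h
  exact h.symm

lemma r5 : ∑ i : ZMod M, ∑ j : ZMod M, v i j * v i (j - 1)
    = ∑ i : ZMod M, ∑ j : ZMod M, v i (j + 1) * v i j := by
  have h := sum_shift (fun a b => v a b * v a (b - 1)) 0 1
  simp only [add_zero, zero_add, add_sub_cancel_right] at h
  exact h.symm

lemma r6 : ∑ i : ZMod M, ∑ j : ZMod M, v (i + 1) (j + 1) * v (i + 1) j
    = ∑ i : ZMod M, ∑ j : ZMod M, v i (j + 1) * v i j := by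
  have h := sum_shift (fun a b => v a (b + 1) * v a b) 1 0
  simpa using h

lemma r7 : ∑ i : ZMod M, ∑ j : ZMod M, v (i + 1) (j + 1) * v i (j + 1)
    = ∑ i : ZMod M, ∑ j : ZMod M, v (i + 1) j * v i j := by
  have h := sum_shift (fun a b => v (a + 1) b * v a b) 0 1
  simpa using h

lemma r8 : ∑ i : ZMod M, ∑ j : ZMod M, v (i + 1) j * v i (j + 1)
    = ∑ i : ZMod M, ∑ j : ZMod M, v (i + 1) (j - 1) * v i j := by
  have h := sum_shift (fun a b => v (a + 1) (b - 1) * v a b) 0 1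
  simp only [add_zero, zero_add, add_sub_cancel_right] at h
  exact h

lemma r9 : ∑ i : ZMod M, ∑ j : ZMod M, v (i + 1) j * v i (j - 1)
    = ∑ i : ZMod M, ∑ j : ZMod M, v (i + 1) (j + 1) * v i j := by
  have h := sum_shift (fun a b => v (a + 1) b * v a (b - 1)) 0 1
  simp only [add_zero, zero_add, add_sub_cancel_right] at h
  exact h.symm

lemma r10 : ∑ i : ZMod M, ∑ j : ZMod M, v (i - 1) j * v i (j + 1)
    = ∑ i : ZMod M, ∑ j : ZMod M, v (i + 1) (j + 1) * v i j := by
  have h := sum_shift (fun a b => v (a - 1) b * v a (b + 1)) 1 0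
  simp only [add_zero, add_sub_cancel_right] at h
  have h2 : ∑ i : ZMod M, ∑ j : ZMod M, v i j * v (i + 1) (j + 1)
      = ∑ i : ZMod M, ∑ j : ZMod M, v (i + 1) (j + 1) * v i j :=
    Finset.sum_congr rfl fun _ _ => Finset.sum_congr rfl fun _ _ => mul_comm _ _
  exact h.symm.trans h2

lemma r11 : ∑ i : ZMod M, ∑ j : ZMod M, v (i - 1) j * v i (j - 1)
    = ∑ i : ZMod M, ∑ j : ZMod M, v (i + 1) (j - 1) * v i j := by
  have h := sum_shift (fun a b => v (a - 1) b * v a (b - 1)) 1 1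
  simp only [add_sub_cancel_right] at h
  have h2 : ∑ i : ZMod M, ∑ j : ZMod M, v i (j + 1) * v (i + 1) j
      = ∑ i : ZMod M, ∑ j : ZMod M, v (i + 1) j * v i (j + 1) :=
    Finset.sum_congr rfl fun _ _ => Finset.sum_congr rfl fun _ _ => mul_comm _ _
  exact h.symm.trans (h2.trans (r8 v))

lemma r12 : ∑ i : ZMod M, ∑ j : ZMod M, v (i - 1) j * v i j
    = ∑ i : ZMod M, ∑ j : ZMod M, v (i + 1) j * v i j := by
  have h := sum_shift (fun a b => v (a - 1) b * v a b) 1 0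
  simp only [add_zero, add_sub_cancel_right] at h
  have h2 : ∑ i : ZMod M, ∑ j : ZMod M, v i j * v (i + 1) j
      = ∑ i : ZMod M, ∑ j : ZMod M, v (i + 1) j * v i j :=
    Finset.sum_congr rfl fun _ _ => Finset.sum_congr rfl fun _ _ => mul_comm _ _
  exact h.symm.trans h2

lemma r13 : ∑ i : ZMod M, ∑ j : ZMod M, v i j * v (i + 1) j
    = ∑ i : ZMod M, ∑ j : ZMod M, v (i + 1) j * v i j :=
  Finset.sum_congr rfl fun _ _ => Finset.sum_congr rfl fun _ _ => mul_comm _ _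

lemma r14 : ∑ i : ZMod M, ∑ j : ZMod M, v i j * v i (j + 1)
    = ∑ i : ZMod M, ∑ j : ZMod M, v i (j + 1) * v i j :=
  Finset.sum_congr rfl fun _ _ => Finset.sum_congr rfl fun _ _ => mul_comm _ _

lemma r_p1shift : ∑ i : ZMod M, ∑ j : ZMod M, (v (i + 1) (j + 1) - v i (j + 1)) ^ 2
    = ∑ i : ZMod M, ∑ j : ZMod M, (v (i + 1) j - v i j) ^ 2 := by
  have h := sum_shift (fun a b => (v (a + 1) b - v a b) ^ 2) 0 1
  simpa using h

lemma idP1 : ∑ i : ZMod M, ∑ j : ZMod M, (v (i + 1) j - v i j) ^ 2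
    = 2 * (∑ i : ZMod M, ∑ j : ZMod M, v i j ^ 2)
      - 2 * (∑ i : ZMod M, ∑ j : ZMod M, v (i + 1) j * v i j) := by
  have e : ∑ i : ZMod M, ∑ j : ZMod M, (v (i + 1) j - v i j) ^ 2
      = ∑ i : ZMod M, ∑ j : ZMod M, (v (i + 1) j ^ 2 + v i j ^ 2 - 2 * (v (i + 1) j * v i j)) :=
    Finset.sum_congr rfl fun _ _ => Finset.sum_congr rfl fun _ _ => by ring
  rw [e]
  simp only [Finset.sum_add_distrib, Finset.sum_sub_distrib, ← Finset.mul_sum]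
  rw [r_sq10 v]
  ring

lemma idP2 : ∑ i : ZMod M, ∑ j : ZMod M, (v i (j + 1) - v i j) ^ 2
    = 2 * (∑ i : ZMod M, ∑ j : ZMod M, v i j ^ 2)
      - 2 * (∑ i : ZMod M, ∑ j : ZMod M, v i (j + 1) * v i j) := by
  have e : ∑ i : ZMod M, ∑ j : ZMod M, (v i (j + 1) - v i j) ^ 2
      = ∑ i : ZMod M, ∑ j : ZMod M, (v i (j + 1) ^ 2 + v i j ^ 2 - 2 * (v i (j + 1) * v i j)) :=
    Finset.sum_congr rfl fun _ _ => Finset.sum_congr rfl fun _ _ => by ring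
  rw [e]
  simp only [Finset.sum_add_distrib, Finset.sum_sub_distrib, ← Finset.mul_sum]
  rw [r_sq01 v]
  ring

lemma idVW : ∑ i : ZMod M, ∑ j : ZMod M,
      v i j * (v (i + 1) j + v (i - 1) j + v i (j + 1) + v i (j - 1) - 4 * v i j)
    = 2 * (∑ i : ZMod M, ∑ j : ZMod M, v (i + 1) j * v i j)
      + 2 * (∑ i : ZMod M, ∑ j : ZMod M, v i (j + 1) * v i j)
      - 4 * (∑ i : ZMod M, ∑ j : ZMod M, v i j ^ 2) := by
  have e : ∑ i : ZMod M, ∑ j : ZMod M,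
        v i j * (v (i + 1) j + v (i - 1) j + v i (j + 1) + v i (j - 1) - 4 * v i j)
      = ∑ i : ZMod M, ∑ j : ZMod M,
        (v i j * v (i + 1) j + v i j * v (i - 1) j + v i j * v i (j + 1) + v i j * v i (j - 1)
          - 4 * v i j ^ 2) :=
    Finset.sum_congr rfl fun _ _ => Finset.sum_congr rfl fun _ _ => by ring
  rw [e]
  simp only [Finset.sum_add_distrib, Finset.sum_sub_distrib, ← Finset.mul_sum]
  rw [r13 v, r4 v, r14 v, r5 v]
  ring

lemma idQ : ∑ i : ZMod M, ∑ j : ZMod M,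
      (v (i + 1) (j + 1) - v (i + 1) j - v i (j + 1) + v i j) ^ 2
    = 4 * (∑ i : ZMod M, ∑ j : ZMod M, v i j ^ 2)
      - 4 * (∑ i : ZMod M, ∑ j : ZMod M, v i (j + 1) * v i j)
      - 4 * (∑ i : ZMod M, ∑ j : ZMod M, v (i + 1) j * v i j)
      + 2 * (∑ i : ZMod M, ∑ j : ZMod M, v (i + 1) (j + 1) * v i j)
      + 2 * (∑ i : ZMod M, ∑ j : ZMod M, v (i + 1) (j - 1) * v i j) := by
  have e : ∑ i : ZMod M, ∑ j : ZMod M,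
        (v (i + 1) (j + 1) - v (i + 1) j - v i (j + 1) + v i j) ^ 2
      = ∑ i : ZMod M, ∑ j : ZMod M,
        (v (i + 1) (j + 1) ^ 2 + v (i + 1) j ^ 2 + v i (j + 1) ^ 2 + v i j ^ 2
          + 2 * (v (i + 1) (j + 1) * v i j) + 2 * (v (i + 1) j * v i (j + 1))
          - 2 * (v (i + 1) (j + 1) * v (i + 1) j) - 2 * (v (i + 1) (j + 1) * v i (j + 1))
          - 2 * (v (i + 1) j * v i j) - 2 * (v i (j + 1) * v i j)) :=
    Finset.sum_congr rfl fun _ _ => Finset.sum_congr rfl fun _ _ => by ring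
  rw [e]
  simp only [Finset.sum_add_distrib, Finset.sum_sub_distrib, ← Finset.mul_sum]
  rw [r_sq11 v, r_sq10 v, r_sq01 v, r6 v, r7 v, r8 v]
  ring

lemma idE12 : ∑ i : ZMod M, ∑ j : ZMod M,
      (v (i + 1) j + v (i - 1) j - 2 * v i j) * (v i (j + 1) + v i (j - 1) - 2 * v i j)
    = 4 * (∑ i : ZMod M, ∑ j : ZMod M, v i j ^ 2)
      - 4 * (∑ i : ZMod M, ∑ j : ZMod M, v i (j + 1) * v i j)
      - 4 * (∑ i : ZMod M, ∑ j : ZMod M, v (i + 1) j * v i j)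
      + 2 * (∑ i : ZMod M, ∑ j : ZMod M, v (i + 1) (j + 1) * v i j)
      + 2 * (∑ i : ZMod M, ∑ j : ZMod M, v (i + 1) (j - 1) * v i j) := by
  have e : ∑ i : ZMod M, ∑ j : ZMod M,
        (v (i + 1) j + v (i - 1) j - 2 * v i j) * (v i (j + 1) + v i (j - 1) - 2 * v i j)
      = ∑ i : ZMod M, ∑ j : ZMod M,
        (v (i + 1) j * v i (j + 1) + v (i + 1) j * v i (j - 1)
          + v (i - 1) j * v i (j + 1) + v (i - 1) j * v i (j - 1)
          + 4 * v i j ^ 2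
          - 2 * (v (i + 1) j * v i j) - 2 * (v (i - 1) j * v i j)
          - 2 * (v i j * v i (j + 1)) - 2 * (v i j * v i (j - 1))) :=
    Finset.sum_congr rfl fun _ _ => Finset.sum_congr rfl fun _ _ => by ring
  rw [e]
  simp only [Finset.sum_add_distrib, Finset.sum_sub_distrib, ← Finset.mul_sum]
  rw [r8 v, r9 v, r10 v, r11 v, r12 v, r14 v, r5 v]
  ring

lemma idW : ∑ i : ZMod M, ∑ j : ZMod M,
      (v (i + 1) j + v (i - 1) j + v i (j + 1) + v i (j - 1) - 4 * v i j) ^ 2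
    = (∑ i : ZMod M, ∑ j : ZMod M, (v (i + 1) j + v (i - 1) j - 2 * v i j) ^ 2)
      + 2 * (∑ i : ZMod M, ∑ j : ZMod M,
          (v (i + 1) j + v (i - 1) j - 2 * v i j) * (v i (j + 1) + v i (j - 1) - 2 * v i j))
      + (∑ i : ZMod M, ∑ j : ZMod M, (v i (j + 1) + v i (j - 1) - 2 * v i j) ^ 2) := by
  have e : ∑ i : ZMod M, ∑ j : ZMod M,
        (v (i + 1) j + v (i - 1) j + v i (j + 1) + v i (j - 1) - 4 * v i j) ^ 2
      = ∑ i : ZMod M, ∑ j : ZMod M,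
        ((v (i + 1) j + v (i - 1) j - 2 * v i j) ^ 2
          + 2 * ((v (i + 1) j + v (i - 1) j - 2 * v i j) * (v i (j + 1) + v i (j - 1) - 2 * v i j))
          + (v i (j + 1) + v i (j - 1) - 2 * v i j) ^ 2) :=
    Finset.sum_congr rfl fun _ _ => Finset.sum_congr rfl fun _ _ => by ring
  rw [e]
  simp only [Finset.sum_add_distrib, ← Finset.mul_sum]


lemma sum_sq_nonneg (f : ZMod M → ZMod M → ℝ) :
    0 ≤ ∑ i : ZMod M, ∑ j : ZMod M, f i j ^ 2 :=
  Finset.sum_nonneg fun _ _ => Finset.sum_nonneg fun _ _ => sq_nonneg _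

lemma q_le_w : ∑ i : ZMod M, ∑ j : ZMod M,
      (v (i + 1) (j + 1) - v (i + 1) j - v i (j + 1) + v i j) ^ 2
    ≤ ∑ i : ZMod M, ∑ j : ZMod M,
      (v (i + 1) j + v (i - 1) j + v i (j + 1) + v i (j - 1) - 4 * v i j) ^ 2 := by
  have h1 := idW v
  have h2 := (idE12 v).trans (idQ v).symm
  have h3 := sum_sq_nonneg (fun i j => v (i + 1) j + v (i - 1) j - 2 * v i j)
  have h4 := sum_sq_nonneg (fun i j => v i (j + 1) + v i (j - 1) - 2 * v i j)
  have h5 := sum_sq_nonneg (fun i j => v (i + 1) (j + 1) - v (i + 1) j - v i (j + 1) + v i j)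
  linarith

lemma p1p2_le : (∑ i : ZMod M, ∑ j : ZMod M, (v (i + 1) j - v i j) ^ 2)
      + (∑ i : ZMod M, ∑ j : ZMod M, (v i (j + 1) - v i j) ^ 2)
    ≤ Real.sqrt (∑ i : ZMod M, ∑ j : ZMod M, v i j ^ 2) *
      Real.sqrt (∑ i : ZMod M, ∑ j : ZMod M,
        (v (i + 1) j + v (i - 1) j + v i (j + 1) + v i (j - 1) - 4 * v i j) ^ 2) := by
  have h1 := idP1 v
  have h2 := idP2 v
  have h3 := idVW v
  have h4 : -(∑ i : ZMod M, ∑ j : ZMod M,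
        v i j * (v (i + 1) j + v (i - 1) j + v i (j + 1) + v i (j - 1) - 4 * v i j))
      ≤ ∑ i : ZMod M, ∑ j : ZMod M,
        |v i j| * |v (i + 1) j + v (i - 1) j + v i (j + 1) + v i (j - 1) - 4 * v i j| := by
    rw [← Finset.sum_neg_distrib]
    apply Finset.sum_le_sum
    intro i _
    rw [← Finset.sum_neg_distrib]
    apply Finset.sum_le_sum
    intro j _
    calc -(v i j * (v (i + 1) j + v (i - 1) j + v i (j + 1) + v i (j - 1) - 4 * v i j))
        ≤ |v i j * (v (i + 1) j + v (i - 1) j + v i (j + 1) + v i (j - 1) - 4 * v i j)| :=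
          neg_le_abs _
      _ = _ := abs_mul _ _
  have h5 := cs2 v (fun i j => v (i + 1) j + v (i - 1) j + v i (j + 1) + v i (j - 1) - 4 * v i j)
  linarith

lemma sum_add_sq_le (f g : ZMod M → ZMod M → ℝ) :
    ∑ i : ZMod M, ∑ j : ZMod M, (f i j + g i j) ^ 2
      ≤ 2 * (∑ i : ZMod M, ∑ j : ZMod M, f i j ^ 2)
        + 2 * (∑ i : ZMod M, ∑ j : ZMod M, g i j ^ 2) := by
  have step : ∑ i : ZMod M, ∑ j : ZMod M, (f i j + g i j) ^ 2
      ≤ ∑ i : ZMod M, ∑ j : ZMod M, (2 * f i j ^ 2 + 2 * g i j ^ 2) := by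
    apply Finset.sum_le_sum; intro i _
    apply Finset.sum_le_sum; intro j _
    nlinarith [sq_nonneg (f i j - g i j)]
  calc ∑ i : ZMod M, ∑ j : ZMod M, (f i j + g i j) ^ 2
      ≤ ∑ i : ZMod M, ∑ j : ZMod M, (2 * f i j ^ 2 + 2 * g i j ^ 2) := step
    _ = 2 * (∑ i : ZMod M, ∑ j : ZMod M, f i j ^ 2)
        + 2 * (∑ i : ZMod M, ∑ j : ZMod M, g i j ^ 2) := by
      simp only [Finset.sum_add_distrib, ← Finset.mul_sum]

lemma sqrt_sum_add_le_1 : Real.sqrt (∑ i : ZMod M, ∑ j : ZMod M, (v (i + 1) j + v i j) ^ 2)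
    ≤ 2 * Real.sqrt (∑ i : ZMod M, ∑ j : ZMod M, v i j ^ 2) := by
  apply sqrt_le_of_le_sq (by positivity)
  have h1 := sum_add_sq_le (fun i j => v (i + 1) j) v
  rw [r_sq10 v] at h1
  have h2 := Real.sq_sqrt (sum_sq_nonneg v)
  nlinarith [h1]

lemma sqrt_sum_add_le_2 : Real.sqrt (∑ i : ZMod M, ∑ j : ZMod M, (v i (j + 1) + v i j) ^ 2)
    ≤ 2 * Real.sqrt (∑ i : ZMod M, ∑ j : ZMod M, v i j ^ 2) := by
  apply sqrt_le_of_le_sq (by positivity)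
  have h1 := sum_add_sq_le (fun i j => v i (j + 1)) v
  rw [r_sq01 v] at h1
  have h2 := Real.sq_sqrt (sum_sq_nonneg v)
  nlinarith [h1]

lemma sqrt_sum_add_le_3 :
    Real.sqrt (∑ i : ZMod M, ∑ j : ZMod M, (v (i + 1) (j + 1) + v (i + 1) j) ^ 2)
    ≤ 2 * Real.sqrt (∑ i : ZMod M, ∑ j : ZMod M, v i j ^ 2) := by
  apply sqrt_le_of_le_sq (by positivity)
  have h1 := sum_add_sq_le (fun i j => v (i + 1) (j + 1)) (fun i j => v (i + 1) j)
  rw [r_sq11 v, r_sq10 v] at h1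
  have h2 := Real.sq_sqrt (sum_sq_nonneg v)
  nlinarith [h1]

lemma sqrt_sum_add_le_4 :
    Real.sqrt (∑ i : ZMod M, ∑ j : ZMod M,
      ((v (i + 1) (j + 1) + v (i + 1) j) - (v i (j + 1) + v i j)) ^ 2)
    ≤ 2 * Real.sqrt (∑ i : ZMod M, ∑ j : ZMod M, (v (i + 1) j - v i j) ^ 2) := by
  apply sqrt_le_of_le_sq (by positivity)
  have e : ∑ i : ZMod M, ∑ j : ZMod M,
        ((v (i + 1) (j + 1) + v (i + 1) j) - (v i (j + 1) + v i j)) ^ 2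
      = ∑ i : ZMod M, ∑ j : ZMod M,
        ((v (i + 1) (j + 1) - v i (j + 1)) + (v (i + 1) j - v i j)) ^ 2 :=
    Finset.sum_congr rfl fun _ _ => Finset.sum_congr rfl fun _ _ => by ring
  rw [e]
  have h1 := sum_add_sq_le (fun i j => v (i + 1) (j + 1) - v i (j + 1))
    (fun i j => v (i + 1) j - v i j)
  rw [r_p1shift v] at h1
  have h2 := Real.sq_sqrt (sum_sq_nonneg (fun i j => v (i + 1) j - v i j))
  nlinarith [h1]

lemma b2 : ∑ i : ZMod M, ∑ j : ZMod M, |v (i + 1) j ^ 2 - v i j ^ 2|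
    ≤ 2 * Real.sqrt (∑ i : ZMod M, ∑ j : ZMod M, v i j ^ 2)
      * Real.sqrt (∑ i : ZMod M, ∑ j : ZMod M, (v (i + 1) j - v i j) ^ 2) := by
  have e : ∑ i : ZMod M, ∑ j : ZMod M, |v (i + 1) j ^ 2 - v i j ^ 2|
      = ∑ i : ZMod M, ∑ j : ZMod M, |v (i + 1) j + v i j| * |v (i + 1) j - v i j| :=
    Finset.sum_congr rfl fun _ _ => Finset.sum_congr rfl fun _ _ => by
      rw [← abs_mul]; congr 1; ring
  rw [e]
  calc ∑ i : ZMod M, ∑ j : ZMod M, |v (i + 1) j + v i j| * |v (i + 1) j - v i j|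
      ≤ Real.sqrt (∑ i : ZMod M, ∑ j : ZMod M, (v (i + 1) j + v i j) ^ 2)
        * Real.sqrt (∑ i : ZMod M, ∑ j : ZMod M, (v (i + 1) j - v i j) ^ 2) :=
        cs2 (fun i j => v (i + 1) j + v i j) (fun i j => v (i + 1) j - v i j)
    _ ≤ 2 * Real.sqrt (∑ i : ZMod M, ∑ j : ZMod M, v i j ^ 2)
        * Real.sqrt (∑ i : ZMod M, ∑ j : ZMod M, (v (i + 1) j - v i j) ^ 2) := by
        apply mul_le_mul_of_nonneg_right (sqrt_sum_add_le_1 v) (Real.sqrt_nonneg _)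

lemma b1 : ∑ i : ZMod M, ∑ j : ZMod M, |v i (j + 1) ^ 2 - v i j ^ 2|
    ≤ 2 * Real.sqrt (∑ i : ZMod M, ∑ j : ZMod M, v i j ^ 2)
      * Real.sqrt (∑ i : ZMod M, ∑ j : ZMod M, (v i (j + 1) - v i j) ^ 2) := by
  have e : ∑ i : ZMod M, ∑ j : ZMod M, |v i (j + 1) ^ 2 - v i j ^ 2|
      = ∑ i : ZMod M, ∑ j : ZMod M, |v i (j + 1) + v i j| * |v i (j + 1) - v i j| :=
    Finset.sum_congr rfl fun _ _ => Finset.sum_congr rfl fun _ _ => by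
      rw [← abs_mul]; congr 1; ring
  rw [e]
  calc ∑ i : ZMod M, ∑ j : ZMod M, |v i (j + 1) + v i j| * |v i (j + 1) - v i j|
      ≤ Real.sqrt (∑ i : ZMod M, ∑ j : ZMod M, (v i (j + 1) + v i j) ^ 2)
        * Real.sqrt (∑ i : ZMod M, ∑ j : ZMod M, (v i (j + 1) - v i j) ^ 2) :=
        cs2 (fun i j => v i (j + 1) + v i j) (fun i j => v i (j + 1) - v i j)
    _ ≤ _ := mul_le_mul_of_nonneg_right (sqrt_sum_add_le_2 v) (Real.sqrt_nonneg _)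

lemma b3 : ∑ i : ZMod M, ∑ j : ZMod M,
      |(v (i + 1) (j + 1) ^ 2 - v (i + 1) j ^ 2) - (v i (j + 1) ^ 2 - v i j ^ 2)|
    ≤ 2 * Real.sqrt (∑ i : ZMod M, ∑ j : ZMod M, v i j ^ 2)
        * Real.sqrt (∑ i : ZMod M, ∑ j : ZMod M,
            (v (i + 1) (j + 1) - v (i + 1) j - v i (j + 1) + v i j) ^ 2)
      + 2 * Real.sqrt (∑ i : ZMod M, ∑ j : ZMod M, (v (i + 1) j - v i j) ^ 2)
        * Real.sqrt (∑ i : ZMod M, ∑ j : ZMod M, (v i (j + 1) - v i j) ^ 2) := by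
  have hpt : ∀ i j : ZMod M,
      |(v (i + 1) (j + 1) ^ 2 - v (i + 1) j ^ 2) - (v i (j + 1) ^ 2 - v i j ^ 2)|
      ≤ |v (i + 1) (j + 1) - v (i + 1) j - v i (j + 1) + v i j|
          * |v (i + 1) (j + 1) + v (i + 1) j|
        + |v i (j + 1) - v i j|
          * |(v (i + 1) (j + 1) + v (i + 1) j) - (v i (j + 1) + v i j)| := by
    intro i j
    have key : (v (i + 1) (j + 1) ^ 2 - v (i + 1) j ^ 2) - (v i (j + 1) ^ 2 - v i j ^ 2)
        = (v (i + 1) (j + 1) - v (i + 1) j - v i (j + 1) + v i j)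
            * (v (i + 1) (j + 1) + v (i + 1) j)
          + (v i (j + 1) - v i j)
            * ((v (i + 1) (j + 1) + v (i + 1) j) - (v i (j + 1) + v i j)) := by ring
    rw [key]
    calc |_ + _| ≤ |(v (i + 1) (j + 1) - v (i + 1) j - v i (j + 1) + v i j)
            * (v (i + 1) (j + 1) + v (i + 1) j)|
          + |(v i (j + 1) - v i j)
            * ((v (i + 1) (j + 1) + v (i + 1) j) - (v i (j + 1) + v i j))| := abs_add_le _ _
      _ = _ := by rw [abs_mul, abs_mul]
  have step : ∑ i : ZMod M, ∑ j : ZMod M,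
        |(v (i + 1) (j + 1) ^ 2 - v (i + 1) j ^ 2) - (v i (j + 1) ^ 2 - v i j ^ 2)|
      ≤ (∑ i : ZMod M, ∑ j : ZMod M,
          |v (i + 1) (j + 1) - v (i + 1) j - v i (j + 1) + v i j|
            * |v (i + 1) (j + 1) + v (i + 1) j|)
        + ∑ i : ZMod M, ∑ j : ZMod M,
          |v i (j + 1) - v i j|
            * |(v (i + 1) (j + 1) + v (i + 1) j) - (v i (j + 1) + v i j)| := by
    rw [← Finset.sum_add_distrib]
    apply Finset.sum_le_sum; intro i _
    rw [← Finset.sum_add_distrib]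
    apply Finset.sum_le_sum; intro j _
    exact hpt i j
  have t1 : ∑ i : ZMod M, ∑ j : ZMod M,
        |v (i + 1) (j + 1) - v (i + 1) j - v i (j + 1) + v i j|
          * |v (i + 1) (j + 1) + v (i + 1) j|
      ≤ Real.sqrt (∑ i : ZMod M, ∑ j : ZMod M,
            (v (i + 1) (j + 1) - v (i + 1) j - v i (j + 1) + v i j) ^ 2)
        * (2 * Real.sqrt (∑ i : ZMod M, ∑ j : ZMod M, v i j ^ 2)) := by
    calc ∑ i : ZMod M, ∑ j : ZMod M,
          |v (i + 1) (j + 1) - v (i + 1) j - v i (j + 1) + v i j|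
            * |v (i + 1) (j + 1) + v (i + 1) j|
        ≤ Real.sqrt (∑ i : ZMod M, ∑ j : ZMod M,
              (v (i + 1) (j + 1) - v (i + 1) j - v i (j + 1) + v i j) ^ 2)
          * Real.sqrt (∑ i : ZMod M, ∑ j : ZMod M, (v (i + 1) (j + 1) + v (i + 1) j) ^ 2) :=
          cs2 (fun i j => v (i + 1) (j + 1) - v (i + 1) j - v i (j + 1) + v i j)
            (fun i j => v (i + 1) (j + 1) + v (i + 1) j)
      _ ≤ _ := mul_le_mul_of_nonneg_left (sqrt_sum_add_le_3 v) (Real.sqrt_nonneg _)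
  have t2 : ∑ i : ZMod M, ∑ j : ZMod M,
        |v i (j + 1) - v i j| * |(v (i + 1) (j + 1) + v (i + 1) j) - (v i (j + 1) + v i j)|
      ≤ Real.sqrt (∑ i : ZMod M, ∑ j : ZMod M, (v i (j + 1) - v i j) ^ 2)
        * (2 * Real.sqrt (∑ i : ZMod M, ∑ j : ZMod M, (v (i + 1) j - v i j) ^ 2)) := by
    calc ∑ i : ZMod M, ∑ j : ZMod M,
          |v i (j + 1) - v i j| * |(v (i + 1) (j + 1) + v (i + 1) j) - (v i (j + 1) + v i j)|
        ≤ Real.sqrt (∑ i : ZMod M, ∑ j : ZMod M, (v i (j + 1) - v i j) ^ 2)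
          * Real.sqrt (∑ i : ZMod M, ∑ j : ZMod M,
              ((v (i + 1) (j + 1) + v (i + 1) j) - (v i (j + 1) + v i j)) ^ 2) :=
          cs2 (fun i j => v i (j + 1) - v i j)
            (fun i j => (v (i + 1) (j + 1) + v (i + 1) j) - (v i (j + 1) + v i j))
      _ ≤ _ := mul_le_mul_of_nonneg_left (sqrt_sum_add_le_4 v) (Real.sqrt_nonneg _)
  calc ∑ i : ZMod M, ∑ j : ZMod M,
        |(v (i + 1) (j + 1) ^ 2 - v (i + 1) j ^ 2) - (v i (j + 1) ^ 2 - v i j ^ 2)| ≤ _ := step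
    _ ≤ _ := by
        have := add_le_add t1 t2
        calc _ ≤ _ := this
          _ = _ := by ring


lemma master (i j : ZMod M) :
    v i j ^ 2 ≤ (∑ i : ZMod M, ∑ j : ZMod M, v i j ^ 2) / (M : ℝ) ^ 2
      + (2 / (M : ℝ)) * (Real.sqrt (∑ i : ZMod M, ∑ j : ZMod M, v i j ^ 2)
          * Real.sqrt (∑ i : ZMod M, ∑ j : ZMod M, (v (i + 1) j - v i j) ^ 2))
      + (2 / (M : ℝ)) * (Real.sqrt (∑ i : ZMod M, ∑ j : ZMod M, v i j ^ 2)
          * Real.sqrt (∑ i : ZMod M, ∑ j : ZMod M, (v i (j + 1) - v i j) ^ 2))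
      + 2 * (Real.sqrt (∑ i : ZMod M, ∑ j : ZMod M, v i j ^ 2)
          * Real.sqrt (∑ i : ZMod M, ∑ j : ZMod M,
              (v (i + 1) (j + 1) - v (i + 1) j - v i (j + 1) + v i j) ^ 2))
      + 2 * (Real.sqrt (∑ i : ZMod M, ∑ j : ZMod M, (v (i + 1) j - v i j) ^ 2)
          * Real.sqrt (∑ i : ZMod M, ∑ j : ZMod M, (v i (j + 1) - v i j) ^ 2)) := by
  have hM0 : (0 : ℝ) < M := by
    have := NeZero.pos M
    exact_mod_cast this
  have hMinv : (0 : ℝ) ≤ 1 / M := by positivity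
  have A1 : v i j ^ 2 ≤ (1 / (M : ℝ)) * (∑ k : ZMod M, v i k ^ 2)
      + ∑ l : ZMod M, |v i (l + 1) ^ 2 - v i l ^ 2| := by
    simpa using oneD (fun l => v i l ^ 2) j
  have A2 : (∑ k : ZMod M, v i k ^ 2)
      ≤ (1 / (M : ℝ)) * (∑ x : ZMod M, ∑ l : ZMod M, v x l ^ 2)
        + ∑ x : ZMod M, |(∑ l : ZMod M, v (x + 1) l ^ 2) - ∑ l : ZMod M, v x l ^ 2| := by
    simpa using oneD (fun x => ∑ l : ZMod M, v x l ^ 2) i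
  have A3 : (∑ x : ZMod M, |(∑ l : ZMod M, v (x + 1) l ^ 2) - ∑ l : ZMod M, v x l ^ 2|)
      ≤ ∑ x : ZMod M, ∑ l : ZMod M, |v (x + 1) l ^ 2 - v x l ^ 2| := by
    apply Finset.sum_le_sum; intro x _
    rw [← Finset.sum_sub_distrib]
    exact Finset.abs_sum_le_sum_abs _ _
  have A4 : (∑ l : ZMod M, |v i (l + 1) ^ 2 - v i l ^ 2|)
      ≤ (1 / (M : ℝ)) * (∑ x : ZMod M, ∑ l : ZMod M, |v x (l + 1) ^ 2 - v x l ^ 2|)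
        + ∑ x : ZMod M, abs ((∑ l : ZMod M, |v (x + 1) (l + 1) ^ 2 - v (x + 1) l ^ 2|)
            - ∑ l : ZMod M, |v x (l + 1) ^ 2 - v x l ^ 2|) := by
    simpa using oneD (fun x => ∑ l : ZMod M, |v x (l + 1) ^ 2 - v x l ^ 2|) i
  have A5 : (∑ x : ZMod M, abs ((∑ l : ZMod M, |v (x + 1) (l + 1) ^ 2 - v (x + 1) l ^ 2|)
          - ∑ l : ZMod M, |v x (l + 1) ^ 2 - v x l ^ 2|))
      ≤ ∑ x : ZMod M, ∑ l : ZMod M,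
          |(v (x + 1) (l + 1) ^ 2 - v (x + 1) l ^ 2) - (v x (l + 1) ^ 2 - v x l ^ 2)| := by
    apply Finset.sum_le_sum; intro x _
    rw [← Finset.sum_sub_distrib]
    refine (Finset.abs_sum_le_sum_abs _ _).trans (Finset.sum_le_sum fun l _ => ?_)
    exact abs_abs_sub_abs_le_abs_sub _ _
  have hb1 := b1 v
  have hb2 := b2 v
  have hb3 := b3 v
  have k1 : (1 / (M : ℝ)) * (∑ k : ZMod M, v i k ^ 2)
      ≤ (1 / (M : ℝ)) * ((1 / (M : ℝ)) * (∑ x : ZMod M, ∑ l : ZMod M, v x l ^ 2)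
          + 2 * Real.sqrt (∑ x : ZMod M, ∑ l : ZMod M, v x l ^ 2)
            * Real.sqrt (∑ x : ZMod M, ∑ l : ZMod M, (v (x + 1) l - v x l) ^ 2)) := by
    apply mul_le_mul_of_nonneg_left _ hMinv
    linarith
  have k2 : (∑ l : ZMod M, |v i (l + 1) ^ 2 - v i l ^ 2|)
      ≤ (1 / (M : ℝ)) * (2 * Real.sqrt (∑ x : ZMod M, ∑ l : ZMod M, v x l ^ 2)
            * Real.sqrt (∑ x : ZMod M, ∑ l : ZMod M, (v x (l + 1) - v x l) ^ 2))
        + (2 * Real.sqrt (∑ x : ZMod M, ∑ l : ZMod M, v x l ^ 2)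
            * Real.sqrt (∑ x : ZMod M, ∑ l : ZMod M,
                (v (x + 1) (l + 1) - v (x + 1) l - v x (l + 1) + v x l) ^ 2)
          + 2 * Real.sqrt (∑ x : ZMod M, ∑ l : ZMod M, (v (x + 1) l - v x l) ^ 2)
            * Real.sqrt (∑ x : ZMod M, ∑ l : ZMod M, (v x (l + 1) - v x l) ^ 2)) := by
    have hmid : (1 / (M : ℝ)) * (∑ x : ZMod M, ∑ l : ZMod M, |v x (l + 1) ^ 2 - v x l ^ 2|)
        ≤ (1 / (M : ℝ)) * (2 * Real.sqrt (∑ x : ZMod M, ∑ l : ZMod M, v x l ^ 2)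
            * Real.sqrt (∑ x : ZMod M, ∑ l : ZMod M, (v x (l + 1) - v x l) ^ 2)) :=
      mul_le_mul_of_nonneg_left hb1 hMinv
    linarith [A5.trans hb3]
  have expand : (1 / (M : ℝ)) * ((1 / (M : ℝ)) * (∑ x : ZMod M, ∑ l : ZMod M, v x l ^ 2)
          + 2 * Real.sqrt (∑ x : ZMod M, ∑ l : ZMod M, v x l ^ 2)
            * Real.sqrt (∑ x : ZMod M, ∑ l : ZMod M, (v (x + 1) l - v x l) ^ 2))
      = (∑ x : ZMod M, ∑ l : ZMod M, v x l ^ 2) / (M : ℝ) ^ 2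
        + (2 / (M : ℝ)) * (Real.sqrt (∑ x : ZMod M, ∑ l : ZMod M, v x l ^ 2)
            * Real.sqrt (∑ x : ZMod M, ∑ l : ZMod M, (v (x + 1) l - v x l) ^ 2)) := by
    field_simp
  have expand2 : (1 / (M : ℝ)) * (2 * Real.sqrt (∑ x : ZMod M, ∑ l : ZMod M, v x l ^ 2)
            * Real.sqrt (∑ x : ZMod M, ∑ l : ZMod M, (v x (l + 1) - v x l) ^ 2))
      = (2 / (M : ℝ)) * (Real.sqrt (∑ x : ZMod M, ∑ l : ZMod M, v x l ^ 2)
            * Real.sqrt (∑ x : ZMod M, ∑ l : ZMod M, (v x (l + 1) - v x l) ^ 2)) := by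
    ring
  linarith [A1, k1.trans_eq expand, k2]

lemma key_ineq (i j : ZMod M) :
    v i j ^ 2 ≤ (∑ i : ZMod M, ∑ j : ZMod M, v i j ^ 2) / (M : ℝ) ^ 2
      + (4 / (M : ℝ)) * (Real.sqrt (∑ i : ZMod M, ∑ j : ZMod M, v i j ^ 2)
          * Real.sqrt (Real.sqrt (∑ i : ZMod M, ∑ j : ZMod M, v i j ^ 2)
              * Real.sqrt (∑ i : ZMod M, ∑ j : ZMod M,
                  (v (i + 1) j + v (i - 1) j + v i (j + 1) + v i (j - 1) - 4 * v i j) ^ 2)))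
      + 3 * (Real.sqrt (∑ i : ZMod M, ∑ j : ZMod M, v i j ^ 2)
          * Real.sqrt (∑ i : ZMod M, ∑ j : ZMod M,
              (v (i + 1) j + v (i - 1) j + v i (j + 1) + v i (j - 1) - 4 * v i j) ^ 2)) := by
  have hM0 : (0 : ℝ) < M := by
    have := NeZero.pos M
    exact_mod_cast this
  have hP1n := sum_sq_nonneg (fun i j => v (i + 1) j - v i j)
  have hP2n := sum_sq_nonneg (fun i j => v i (j + 1) - v i j)
  have hQn := sum_sq_nonneg (fun i j => v (i + 1) (j + 1) - v (i + 1) j - v i (j + 1) + v i j)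
  have hSn := sum_sq_nonneg v
  have hsS := Real.sqrt_nonneg (∑ i : ZMod M, ∑ j : ZMod M, v i j ^ 2)
  have hsW := Real.sqrt_nonneg (∑ i : ZMod M, ∑ j : ZMod M,
      (v (i + 1) j + v (i - 1) j + v i (j + 1) + v i (j - 1) - 4 * v i j) ^ 2)
  have hp := p1p2_le v
  have c1 : Real.sqrt (∑ i : ZMod M, ∑ j : ZMod M, (v (i + 1) j - v i j) ^ 2)
      ≤ Real.sqrt (Real.sqrt (∑ i : ZMod M, ∑ j : ZMod M, v i j ^ 2)
          * Real.sqrt (∑ i : ZMod M, ∑ j : ZMod M,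
              (v (i + 1) j + v (i - 1) j + v i (j + 1) + v i (j - 1) - 4 * v i j) ^ 2)) :=
    Real.sqrt_le_sqrt (by linarith)
  have c2 : Real.sqrt (∑ i : ZMod M, ∑ j : ZMod M, (v i (j + 1) - v i j) ^ 2)
      ≤ Real.sqrt (Real.sqrt (∑ i : ZMod M, ∑ j : ZMod M, v i j ^ 2)
          * Real.sqrt (∑ i : ZMod M, ∑ j : ZMod M,
              (v (i + 1) j + v (i - 1) j + v i (j + 1) + v i (j - 1) - 4 * v i j) ^ 2)) :=
    Real.sqrt_le_sqrt (by linarith)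
  have c3 : Real.sqrt (∑ i : ZMod M, ∑ j : ZMod M,
        (v (i + 1) (j + 1) - v (i + 1) j - v i (j + 1) + v i j) ^ 2)
      ≤ Real.sqrt (∑ i : ZMod M, ∑ j : ZMod M,
        (v (i + 1) j + v (i - 1) j + v i (j + 1) + v i (j - 1) - 4 * v i j) ^ 2) :=
    Real.sqrt_le_sqrt (q_le_w v)
  have c4 : 2 * (Real.sqrt (∑ i : ZMod M, ∑ j : ZMod M, (v (i + 1) j - v i j) ^ 2)
        * Real.sqrt (∑ i : ZMod M, ∑ j : ZMod M, (v i (j + 1) - v i j) ^ 2))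
      ≤ Real.sqrt (∑ i : ZMod M, ∑ j : ZMod M, v i j ^ 2)
        * Real.sqrt (∑ i : ZMod M, ∑ j : ZMod M,
            (v (i + 1) j + v (i - 1) j + v i (j + 1) + v i (j - 1) - 4 * v i j) ^ 2) := by
    nlinarith [sq_nonneg (Real.sqrt (∑ i : ZMod M, ∑ j : ZMod M, (v (i + 1) j - v i j) ^ 2)
        - Real.sqrt (∑ i : ZMod M, ∑ j : ZMod M, (v i (j + 1) - v i j) ^ 2)),
      Real.sq_sqrt hP1n, Real.sq_sqrt hP2n]
  have hm := master v i j
  have d1 : (2 / (M : ℝ)) * (Real.sqrt (∑ i : ZMod M, ∑ j : ZMod M, v i j ^ 2)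
        * Real.sqrt (∑ i : ZMod M, ∑ j : ZMod M, (v (i + 1) j - v i j) ^ 2))
      ≤ (2 / (M : ℝ)) * (Real.sqrt (∑ i : ZMod M, ∑ j : ZMod M, v i j ^ 2)
        * Real.sqrt (Real.sqrt (∑ i : ZMod M, ∑ j : ZMod M, v i j ^ 2)
          * Real.sqrt (∑ i : ZMod M, ∑ j : ZMod M,
              (v (i + 1) j + v (i - 1) j + v i (j + 1) + v i (j - 1) - 4 * v i j) ^ 2))) := by
    apply mul_le_mul_of_nonneg_left _ (by positivity)
    exact mul_le_mul_of_nonneg_left c1 hsS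
  have d2 : (2 / (M : ℝ)) * (Real.sqrt (∑ i : ZMod M, ∑ j : ZMod M, v i j ^ 2)
        * Real.sqrt (∑ i : ZMod M, ∑ j : ZMod M, (v i (j + 1) - v i j) ^ 2))
      ≤ (2 / (M : ℝ)) * (Real.sqrt (∑ i : ZMod M, ∑ j : ZMod M, v i j ^ 2)
        * Real.sqrt (Real.sqrt (∑ i : ZMod M, ∑ j : ZMod M, v i j ^ 2)
          * Real.sqrt (∑ i : ZMod M, ∑ j : ZMod M,
              (v (i + 1) j + v (i - 1) j + v i (j + 1) + v i (j - 1) - 4 * v i j) ^ 2))) := by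
    apply mul_le_mul_of_nonneg_left _ (by positivity)
    exact mul_le_mul_of_nonneg_left c2 hsS
  have d3 : 2 * (Real.sqrt (∑ i : ZMod M, ∑ j : ZMod M, v i j ^ 2)
        * Real.sqrt (∑ i : ZMod M, ∑ j : ZMod M,
            (v (i + 1) (j + 1) - v (i + 1) j - v i (j + 1) + v i j) ^ 2))
      ≤ 2 * (Real.sqrt (∑ i : ZMod M, ∑ j : ZMod M, v i j ^ 2)
        * Real.sqrt (∑ i : ZMod M, ∑ j : ZMod M,
            (v (i + 1) j + v (i - 1) j + v i (j + 1) + v i (j - 1) - 4 * v i j) ^ 2)) := by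
    apply mul_le_mul_of_nonneg_left _ (by norm_num)
    exact mul_le_mul_of_nonneg_left c3 hsS
  have comb := add_le_add (add_le_add (add_le_add (add_le_add
    (le_refl ((∑ i : ZMod M, ∑ j : ZMod M, v i j ^ 2) / (M : ℝ) ^ 2)) d1) d2) d3) c4
  exact le_of_le_of_eq (hm.trans comb) (by ring)

lemma dnorm_eq (h : ℝ) (hh : 0 ≤ h) (u : ZMod M → ZMod M → ℝ) :
    dNorm M h u = h * Real.sqrt (∑ i : ZMod M, ∑ j : ZMod M, u i j ^ 2) := by
  unfold dNorm dInner
  have e : ∑ i : ZMod M, ∑ j : ZMod M, u i j * u i j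
      = ∑ i : ZMod M, ∑ j : ZMod M, u i j ^ 2 :=
    Finset.sum_congr rfl fun _ _ => Finset.sum_congr rfl fun _ _ => (pow_two _).symm
  rw [e, Real.sqrt_mul (sq_nonneg h), Real.sqrt_sq hh]

lemma dnorm_sub_le (h : ℝ) (hh : 0 ≤ h) (a b : ZMod M → ZMod M → ℝ) :
    dNorm M h (fun i j => a i j - b i j) ≤ dNorm M h a + dNorm M h b := by
  rw [dnorm_eq h hh, dnorm_eq h hh, dnorm_eq h hh, ← mul_add]
  apply mul_le_mul_of_nonneg_left _ hh
  apply sqrt_le_of_le_sq (by positivity)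
  have e : ∑ i : ZMod M, ∑ j : ZMod M, (a i j - b i j) ^ 2
      = ∑ i : ZMod M, ∑ j : ZMod M,
        (a i j ^ 2 + b i j ^ 2 - 2 * (a i j * b i j)) :=
    Finset.sum_congr rfl fun _ _ => Finset.sum_congr rfl fun _ _ => by ring
  have e2 : ∑ i : ZMod M, ∑ j : ZMod M,
        (a i j ^ 2 + b i j ^ 2 - 2 * (a i j * b i j))
      = (∑ i : ZMod M, ∑ j : ZMod M, a i j ^ 2)
        + (∑ i : ZMod M, ∑ j : ZMod M, b i j ^ 2)
        - 2 * (∑ i : ZMod M, ∑ j : ZMod M, a i j * b i j) := by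
    simp only [Finset.sum_add_distrib, Finset.sum_sub_distrib, ← Finset.mul_sum]
  have cross : -(∑ i : ZMod M, ∑ j : ZMod M, a i j * b i j)
      ≤ ∑ i : ZMod M, ∑ j : ZMod M, |a i j| * |b i j| := by
    rw [← Finset.sum_neg_distrib]
    apply Finset.sum_le_sum; intro i _
    rw [← Finset.sum_neg_distrib]
    apply Finset.sum_le_sum; intro j _
    calc -(a i j * b i j) ≤ |a i j * b i j| := neg_le_abs _
      _ = _ := abs_mul _ _
  have hcs := cs2 a b
  have exp2 : (Real.sqrt (∑ i : ZMod M, ∑ j : ZMod M, a i j ^ 2)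
        + Real.sqrt (∑ i : ZMod M, ∑ j : ZMod M, b i j ^ 2)) ^ 2
      = (∑ i : ZMod M, ∑ j : ZMod M, a i j ^ 2)
        + 2 * (Real.sqrt (∑ i : ZMod M, ∑ j : ZMod M, a i j ^ 2)
            * Real.sqrt (∑ i : ZMod M, ∑ j : ZMod M, b i j ^ 2))
        + (∑ i : ZMod M, ∑ j : ZMod M, b i j ^ 2) := by
    rw [add_sq, Real.sq_sqrt (sum_sq_nonneg a), Real.sq_sqrt (sum_sq_nonneg b)]
    ring
  rw [e, e2, exp2]
  linarith

end DEIaux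

theorem discrete_embedding_inequality (L : ℝ) (hL : 0 < L) :
    ∃ C > (0 : ℝ), ∀ (M : ℕ) [NeZero M], 2 ≤ M →
      ∀ v : ZMod M → ZMod M → ℝ, ∀ i j : ZMod M,
        |v i j| ≤ C * (dNorm M (L / M) v + dNorm M (L / M) (opA M (L / M) v)) := by
  refine ⟨2 / L + 6, by positivity, ?_⟩
  intro M _ hM2 v i j
  have hM0 : (0 : ℝ) < M := by
    have : 0 < M := lt_of_lt_of_le (by norm_num) hM2
    exact_mod_cast this
  set h : ℝ := L / M with hh
  have hhpos : 0 < h := div_pos hL hM0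
  have hhM : h * M = L := div_mul_cancel₀ L (ne_of_gt hM0)
  have hSn := DEIaux.sum_sq_nonneg v
  have hWn := DEIaux.sum_sq_nonneg
    (fun i j => v (i + 1) j + v (i - 1) j + v i (j + 1) + v i (j - 1) - 4 * v i j)
  set sS := Real.sqrt (∑ i : ZMod M, ∑ j : ZMod M, v i j ^ 2) with hsSdef
  set sW := Real.sqrt (∑ i : ZMod M, ∑ j : ZMod M,
      (v (i + 1) j + v (i - 1) j + v i (j + 1) + v i (j - 1) - 4 * v i j) ^ 2) with hsWdef
  set N := dNorm M h v with hNdef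
  set NA := dNorm M h (opA M h v) with hNAdef
  set NW := dNorm M h (dLap M h v) with hNWdef
  have hN0 : 0 ≤ N := Real.sqrt_nonneg _
  have hNA0 : 0 ≤ NA := Real.sqrt_nonneg _
  have hNW0 : 0 ≤ NW := Real.sqrt_nonneg _
  -- N = h * sS
  have hNeq : N = h * sS := DEIaux.dnorm_eq h hhpos.le v
  -- NW = sW / h
  have hNWeq : NW = sW / h := by
    rw [hNWdef, DEIaux.dnorm_eq h hhpos.le]
    have e : ∑ i : ZMod M, ∑ j : ZMod M, dLap M h v i j ^ 2
        = (∑ i : ZMod M, ∑ j : ZMod M,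
            (v (i + 1) j + v (i - 1) j + v i (j + 1) + v i (j - 1) - 4 * v i j) ^ 2)
          / (h ^ 2) ^ 2 := by
      unfold dLap
      simp only [div_pow, Finset.sum_div]
    rw [e, Real.sqrt_div hWn, Real.sqrt_sq (sq_nonneg h), hsWdef]
    field_simp
  have hsWeq : sW = NW * h := by
    rw [hNWeq]; field_simp
  -- triangle : NW ≤ NA + N
  have hlap : dLap M h v = fun i j => opA M h v i j - v i j := by
    funext a b
    simp only [opA, Pi.add_apply]
    ring
  have htri : NW ≤ NA + N := by
    rw [hNWdef, hlap]
    exact DEIaux.dnorm_sub_le h hhpos.le (opA M h v) v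
  -- key inequality
  have hkey := DEIaux.key_ineq v i j
  rw [← hsSdef, ← hsWdef] at hkey
  -- substitute
  have hsSeq : sS = N / h := by rw [hNeq]; field_simp
  have e1 : (∑ i : ZMod M, ∑ j : ZMod M, v i j ^ 2) / (M : ℝ) ^ 2 = N ^ 2 / L ^ 2 := by
    have hS : (∑ i : ZMod M, ∑ j : ZMod M, v i j ^ 2) = sS ^ 2 := (Real.sq_sqrt hSn).symm
    rw [hS, hsSeq, div_pow, div_div, ← mul_pow, hhM]
  have e2 : sS * sW = N * NW := by
    rw [hsSeq, hsWeq]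
    field_simp
  have e3 : (4 / (M : ℝ)) * (sS * Real.sqrt (sS * sW)) = (4 / L) * (N * Real.sqrt (N * NW)) := by
    rw [e2, hsSeq, ← hhM]
    ring
  rw [e1, e3, e2] at hkey
  have havg : Real.sqrt (N * NW) ≤ (N + NW) / 2 := DEIaux.sqrt_mul_le_avg hN0 hNW0
  have hterm : (4 / L) * (N * Real.sqrt (N * NW)) ≤ (4 / L) * (N * ((N + NW) / 2)) := by
    apply mul_le_mul_of_nonneg_left _ (by positivity)
    exact mul_le_mul_of_nonneg_left havg hN0
  have key2 : v i j ^ 2 ≤ N ^ 2 / L ^ 2 + (4 / L) * (N * ((N + NW) / 2)) + 3 * (N * NW) := by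
    linarith [hkey, hterm]
  have hsq : v i j ^ 2 ≤ ((1 / L + 3) * (N + NW)) ^ 2 := by
    have hli : (0 : ℝ) ≤ 1 / L := by positivity
    have hli2 : (0 : ℝ) ≤ (1 / L) ^ 2 := sq_nonneg _
    have hNNW : (0 : ℝ) ≤ N * NW := mul_nonneg hN0 hNW0
    have hN2 : (0 : ℝ) ≤ N ^ 2 := sq_nonneg N
    have hNW2 : (0 : ℝ) ≤ NW ^ 2 := sq_nonneg NW
    have hdiff : ((1 / L + 3) * (N + NW)) ^ 2
        = N ^ 2 / L ^ 2 + (4 / L) * (N * ((N + NW) / 2)) + 3 * (N * NW)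
          + ((1 / L) ^ 2 * (2 * (N * NW)) + (1 / L) ^ 2 * NW ^ 2 + (1 / L) * (4 * N ^ 2)
            + (1 / L) * (10 * (N * NW)) + (1 / L) * (6 * NW ^ 2)
            + 9 * N ^ 2 + 15 * (N * NW) + 9 * NW ^ 2) := by ring
    have t1 : (0 : ℝ) ≤ (1 / L) ^ 2 * (2 * (N * NW)) := mul_nonneg hli2 (by linarith)
    have t2 : (0 : ℝ) ≤ (1 / L) ^ 2 * NW ^ 2 := mul_nonneg hli2 hNW2
    have t3 : (0 : ℝ) ≤ (1 / L) * (4 * N ^ 2) := mul_nonneg hli (by linarith)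
    have t4 : (0 : ℝ) ≤ (1 / L) * (10 * (N * NW)) := mul_nonneg hli (by linarith)
    have t5 : (0 : ℝ) ≤ (1 / L) * (6 * NW ^ 2) := mul_nonneg hli (by linarith)
    linarith [key2, hdiff, t1, t2, t3, t4, t5, hN2, hNNW, hNW2]
  have habs : |v i j| ≤ (1 / L + 3) * (N + NW) := by
    have hc : 0 ≤ (1 / L + 3) * (N + NW) :=
      mul_nonneg (by positivity) (add_nonneg hN0 hNW0)
    calc |v i j| = Real.sqrt (v i j ^ 2) := (Real.sqrt_sq_eq_abs _).symm
      _ ≤ Real.sqrt (((1 / L + 3) * (N + NW)) ^ 2) := Real.sqrt_le_sqrt hsq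
      _ = (1 / L + 3) * (N + NW) := Real.sqrt_sq hc
  have hfin : (1 / L + 3) * (N + NW) ≤ (2 / L + 6) * (N + NA) := by
    have h1 : (0 : ℝ) < 1 / L + 3 := by positivity
    have s1 : (1 / L + 3) * (N + NW) ≤ (1 / L + 3) * (2 * N + NA) :=
      mul_le_mul_of_nonneg_left (by linarith [htri]) h1.le
    have s2 : (2 / L + 6) * (N + NA) = (1 / L + 3) * (2 * N + NA) + (1 / L + 3) * NA := by ring
    have s3 : 0 ≤ (1 / L + 3) * NA := mul_nonneg h1.le hNA0
    linarith
  calc |v i j| ≤ (1 / L + 3) * (N + NW) := habs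
    _ ≤ (2 / L + 6) * (N + NA) := hfin
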